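/- Let k, s, n be positive integers with gcd(n,s) = 1 and k < n − 1. Then for all (n−1)-dimensional K-subspaces U and W of F, the projected Gabidulin codes π_U(G_{k,s}) and π_W(G_{k,s}) in K^{(n−1)×n} are equivalent. -/

import Mathlib

open Polynomial

section helpers

variable {K F : Type*} [Field K] [Fintype K] [Field F] [Algebra K F]

lemma gks_pow_add (q : ℕ) (hq : q = Fintype.card K) (x y : F) (m : ℕ) :
    (x + y) ^ q ^ m = x ^ q ^ m + y ^ q ^ m := by
  obtain ⟨t, hp, hcard⟩ := FiniteField.card K (ringChar K)
  haveI : Fact (ringChar K).Prime := ⟨hp⟩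
  haveI : CharP F (ringChar K) :=
    charP_of_injective_algebraMap (algebraMap K F).injective (ringChar K)
  have h : q ^ m = (ringChar K) ^ ((t : ℕ) * m) := by rw [hq, hcard, pow_mul]
  rw [h, add_pow_char_pow]

lemma gks_pow_smul (q : ℕ) (hq : q = Fintype.card K) (κ : K) (x : F) (m : ℕ) :
    (κ • x) ^ q ^ m = κ • x ^ q ^ m := by
  rw [Algebra.smul_def, Algebra.smul_def, mul_pow, ← map_pow]
  subst hq
  rw [FiniteField.pow_card_pow]

lemma gks_linear (q : ℕ) (hq : q = Fintype.card K) (k s : ℕ) (a : Fin k → F) :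
    ∃ ℓ : F →ₗ[K] F, ∀ x : F, ℓ x = ∑ i : Fin k, a i * x ^ q ^ (s * (i : ℕ)) := by
  have h : IsLinearMap K (fun x : F => ∑ i : Fin k, a i * x ^ q ^ (s * (i : ℕ))) := by
    constructor
    · intro x y
      rw [← Finset.sum_add_distrib]
      exact Finset.sum_congr rfl fun i _ => by rw [gks_pow_add q hq, mul_add]
    · intro κ x
      rw [Finset.smul_sum]
      exact Finset.sum_congr rfl fun i _ => by rw [gks_pow_smul q hq, mul_smul_comm]
  exact ⟨IsLinearMap.mk' _ h, fun x => rfl⟩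

lemma hyperplane_functional {n : ℕ} (hn1 : 1 ≤ n) [FiniteDimensional K F]
    (hn : Module.finrank K F = n) (U : Submodule K F)
    (hU : Module.finrank K U = n - 1) :
    ∃ φ : F →ₗ[K] K, φ ≠ 0 ∧ LinearMap.ker φ = U := by
  have hq1 : Module.finrank K (F ⧸ U) = 1 := by
    have := Submodule.finrank_quotient_add_finrank U
    rw [hn, hU] at this
    omega
  let b : Module.Basis (Fin 1) K (F ⧸ U) := Module.finBasisOfFinrankEq K (F ⧸ U) hq1
  refine ⟨(b.coord 0).comp U.mkQ, ?_, ?_⟩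
  · intro h0
    obtain ⟨x, hx⟩ := U.mkQ_surjective (b 0)
    have : ((b.coord 0).comp U.mkQ) x = 1 := by
      simp [hx, Module.Basis.coord_apply, Module.Basis.repr_self]
    rw [h0] at this
    simp at this
  · ext x
    simp only [LinearMap.mem_ker, LinearMap.comp_apply, Module.Basis.coord_apply]
    rw [← Submodule.Quotient.mk_eq_zero U, ← U.mkQ_apply]
    constructor
    · intro h
      have hrep : b.repr (U.mkQ x) = 0 :=
        Finsupp.ext fun j => by fin_cases j; simpa using h
      have := congrArg b.repr.symm hrep
      simpa using this
    · intro h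
      rw [h]; simp

end helpers

/-- Code equivalence of rank-metric codes in `K^{m×n}`. -/
def codeEquiv {K : Type*} [Field K] {m n : ℕ}
    (C1 C2 : Set (Matrix (Fin m) (Fin n) K)) : Prop :=
  ∃ (A : Matrix (Fin m) (Fin m) K) (B : Matrix (Fin n) (Fin n) K)
    (C : Matrix (Fin m) (Fin n) K) (ρ : K ≃+* K), IsUnit A ∧ IsUnit B ∧
      (C2 = (fun X => A * X.map ρ * B + C) '' C1 ∨
        ∃ h : m = n,
          C2 = (fun X => A * ((X.transpose.submatrix (finCongr h) (finCongr h.symm)).map ρ)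
            * B + C) '' C1)

/-- The set `G_{k,s}` of linearized polynomials
`a₀ X + a₁ X^{q^s} + ⋯ + a_{k-1} X^{q^{s(k-1)}}` with `a₀, …, a_{k-1} ∈ F`. -/
def Gks (q k s : ℕ) (F : Type*) [Field F] : Set (Polynomial F) :=
  {p | ∃ a : Fin k → F, p = ∑ i : Fin k, Polynomial.C (a i) * Polynomial.X ^ q ^ (s * (i : ℕ))}

/-- The projected Gabidulin code `π_U(G_{k,s})` in `K^{m×n}` obtained from a basis
`α : Fin m → F` of the `m`-dimensional `K`-subspace `U` of `F` and a coordinate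
isomorphism `v : F ≃ K^n`. -/
def gabCode {K F : Type*} [Field K] [Field F] [Algebra K F] (q k s m n : ℕ)
    (α : Fin m → F) (v : F ≃ₗ[K] (Fin n → K)) : Set (Matrix (Fin m) (Fin n) K) :=
  {M | ∃ p ∈ Gks q k s F, M = Matrix.of fun i j => v (p.eval (α i)) j}

/-- For `gcd(n,s) = 1` and `k < n - 1`, all projections `π_U(G_{k,s})` of the
Gabidulin code to `(n-1)`-dimensional `K`-subspaces `U` of `F` are equivalent. -/
theorem hyperplane_projections_all_equivalent
    (K F : Type*) [Field K] [Fintype K] [Field F] [Algebra K F]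
    (q k s n : ℕ) (hq : q = Fintype.card K) (hn : Module.finrank K F = n)
    (hs : 0 < s) (hgcd : Nat.gcd n s = 1) (hk : 0 < k) (hkn : k < n - 1)
    (U W : Submodule K F)
    (hU : Module.finrank K U = n - 1) (hW : Module.finrank K W = n - 1)
    (αU αW : Fin (n - 1) → F)
    (hαU : LinearIndependent K αU) (hαUspan : Submodule.span K (Set.range αU) = U)
    (hαW : LinearIndependent K αW) (hαWspan : Submodule.span K (Set.range αW) = W)
    (v : F ≃ₗ[K] (Fin n → K)) :
    codeEquiv (gabCode q k s (n - 1) n αU v) (gabCode q k s (n - 1) n αW v) := by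
  classical
  have hn1 : 1 ≤ n := by omega
  haveI : FiniteDimensional K F := Module.finite_of_finrank_pos (by rw [hn]; omega)
  haveI : Algebra.IsAlgebraic K F := Algebra.IsAlgebraic.of_finite K F
  -- trace-form duality: hyperplanes are kernels of `x ↦ Tr(u x)`
  have hnd := traceForm_nondegenerate K F
  set e := (Algebra.traceForm K F).toDual hnd with he
  obtain ⟨φU, hφU0, hφUker⟩ := hyperplane_functional (K := K) (F := F) hn1 hn U hU
  obtain ⟨φW, hφW0, hφWker⟩ := hyperplane_functional (K := K) (F := F) hn1 hn W hW
  set u : F := e.symm φU with hu_def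
  set w : F := e.symm φW with hw_def
  have hu : ∀ x, Algebra.trace K F (u * x) = φU x := by
    intro x
    have h1 : e u = φU := e.apply_symm_apply φU
    have h2 : (e u) x = Algebra.trace K F (u * x) := by
      rw [he, LinearMap.BilinForm.toDual_def, Algebra.traceForm_apply]
    rw [← h2, h1]
  have hw : ∀ x, Algebra.trace K F (w * x) = φW x := by
    intro x
    have h1 : e w = φW := e.apply_symm_apply φW
    have h2 : (e w) x = Algebra.trace K F (w * x) := by
      rw [he, LinearMap.BilinForm.toDual_def, Algebra.traceForm_apply]
    rw [← h2, h1]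
  have hu0 : u ≠ 0 := by
    intro h
    apply hφU0
    have := e.apply_symm_apply φU
    rw [hu_def] at h
    rw [← this, h, map_zero]
  have hw0 : w ≠ 0 := by
    intro h
    apply hφW0
    have := e.apply_symm_apply φW
    rw [hw_def] at h
    rw [← this, h, map_zero]
  set c : F := u * w⁻¹ with hc_def
  have hc0 : c ≠ 0 := mul_ne_zero hu0 (inv_ne_zero hw0)
  have hwc : w * c = u := by
    rw [hc_def]
    field_simp
  have hc : ∀ x : F, x ∈ U ↔ c * x ∈ W := by
    intro x
    rw [← hφUker, ← hφWker, LinearMap.mem_ker, LinearMap.mem_ker, ← hu, ← hw]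
    rw [show w * (c * x) = u * x by rw [← mul_assoc, hwc]]
  -- bases of U
  have hmemU : ∀ i, αU i ∈ U := fun i => hαUspan ▸ Submodule.subset_span ⟨i, rfl⟩
  have hmemW : ∀ i, αW i ∈ W := fun i => hαWspan ▸ Submodule.subset_span ⟨i, rfl⟩
  let αU' : Fin (n - 1) → U := fun i => ⟨αU i, hmemU i⟩
  have hαU'li : LinearIndependent K αU' := by
    apply LinearIndependent.of_comp U.subtype
    exact hαU
  have hβmem : ∀ i, c⁻¹ * αW i ∈ U := by
    intro i
    rw [hc]
    have : c * (c⁻¹ * αW i) = αW i := by field_simp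
    rw [this]
    exact hmemW i
  let β : Fin (n - 1) → U := fun i => ⟨c⁻¹ * αW i, hβmem i⟩
  have hβli : LinearIndependent K β := by
    apply LinearIndependent.of_comp U.subtype
    have hmli : LinearIndependent K fun i => (LinearMap.mulLeft K (c⁻¹ : F)) (αW i) := by
      apply hαW.map' (LinearMap.mulLeft K (c⁻¹ : F))
      rw [LinearMap.ker_eq_bot]
      exact fun x y h => mul_left_cancel₀ (inv_ne_zero hc0) h
    exact hmli
  have hcard : Fintype.card (Fin (n - 1)) = Module.finrank K U := by
    rw [Fintype.card_fin, hU]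
  have hne : Nonempty (Fin (n - 1)) := ⟨⟨0, by omega⟩⟩
  let bU : Module.Basis (Fin (n - 1)) K U := basisOfLinearIndependentOfCardEqFinrank hαU'li hcard
  let bβ : Module.Basis (Fin (n - 1)) K U := basisOfLinearIndependentOfCardEqFinrank hβli hcard
  have hbUcoe : ⇑bU = αU' := coe_basisOfLinearIndependentOfCardEqFinrank hαU'li hcard
  have hbβcoe : ⇑bβ = β := coe_basisOfLinearIndependentOfCardEqFinrank hβli hcard
  set A : Matrix (Fin (n - 1)) (Fin (n - 1)) K := (bU.toMatrix β).transpose with hA_def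
  have hAunit : IsUnit A := by
    have h1 : IsUnit (bU.toMatrix β) := by
      rw [← hbβcoe]
      haveI := bU.invertibleToMatrix bβ
      exact isUnit_of_invertible _
    rw [Matrix.isUnit_iff_isUnit_det] at h1 ⊢
    rwa [hA_def, Matrix.det_transpose]
  have hrel : ∀ i, c⁻¹ * αW i = ∑ l, A i l • αU l := by
    intro i
    have h := bU.sum_toMatrix_smul_self β (j := i)
    have h2 := congrArg (Subtype.val : U → F) h
    rw [show ((β i : U) : F) = c⁻¹ * αW i from rfl] at h2
    rw [← h2]
    rw [Submodule.coe_sum]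
    refine Finset.sum_congr rfl fun l _ => ?_
    rw [SetLike.val_smul, hbUcoe]
    rw [hA_def]
    rfl
  -- evaluation formula
  have heval : ∀ (a : Fin k → F) (x : F),
      Polynomial.eval x (∑ t : Fin k, Polynomial.C (a t) *
        Polynomial.X ^ q ^ (s * (t : ℕ))) = ∑ t : Fin k, a t * x ^ q ^ (s * (t : ℕ)) := by
    intro a x
    rw [Polynomial.eval_finset_sum]
    exact Finset.sum_congr rfl fun t _ => by simp
  -- the key matrix identity
  have hkey : ∀ a : Fin k → F,
      A * (Matrix.of fun i j => v ((∑ t : Fin k, Polynomial.C (a t) *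
          Polynomial.X ^ q ^ (s * (t : ℕ))).eval (αU i)) j)
        = Matrix.of fun i j => v ((∑ t : Fin k, Polynomial.C (a t * c⁻¹ ^ q ^ (s * (t : ℕ))) *
          Polynomial.X ^ q ^ (s * (t : ℕ))).eval (αW i)) j := by
    intro a
    obtain ⟨ℓ, hℓ⟩ := gks_linear q hq k s a
    ext i j
    rw [Matrix.mul_apply]
    simp only [Matrix.of_apply]
    have step1 : ∀ l, A i l * v ((∑ t : Fin k, Polynomial.C (a t) *
        Polynomial.X ^ q ^ (s * (t : ℕ))).eval (αU l)) j = v (ℓ (A i l • αU l)) j := by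
      intro l
      rw [heval, ← hℓ, map_smul, map_smul, Pi.smul_apply, smul_eq_mul]
    calc ∑ l, A i l * v ((∑ t : Fin k, Polynomial.C (a t) *
            Polynomial.X ^ q ^ (s * (t : ℕ))).eval (αU l)) j
        = ∑ l, v (ℓ (A i l • αU l)) j := Finset.sum_congr rfl fun l _ => step1 l
      _ = (∑ l, v (ℓ (A i l • αU l))) j := by rw [Finset.sum_apply]
      _ = v (ℓ (∑ l, A i l • αU l)) j := by rw [← map_sum v, ← map_sum ℓ]
      _ = v (ℓ (c⁻¹ * αW i)) j := by rw [← hrel i]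
      _ = v ((∑ t : Fin k, Polynomial.C (a t * c⁻¹ ^ q ^ (s * (t : ℕ))) *
            Polynomial.X ^ q ^ (s * (t : ℕ))).eval (αW i)) j := by
          rw [hℓ, heval]
          have hx : ∑ t : Fin k, a t * (c⁻¹ * αW i) ^ q ^ (s * (t : ℕ))
              = ∑ t : Fin k, a t * c⁻¹ ^ q ^ (s * (t : ℕ)) * αW i ^ q ^ (s * (t : ℕ)) :=
            Finset.sum_congr rfl fun t _ => by rw [mul_pow]; ring
          rw [hx]
  -- assemble the equivalence
  refine ⟨A, 1, 0, RingEquiv.refl K, hAunit, isUnit_one, Or.inl ?_⟩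
  have hfun : ∀ X : Matrix (Fin (n - 1)) (Fin n) K,
      A * X.map (RingEquiv.refl K) * (1 : Matrix (Fin n) (Fin n) K) +
        (0 : Matrix (Fin (n - 1)) (Fin n) K) = A * X := by
    intro X
    have h : X.map (RingEquiv.refl K) = X := by
      ext i j; simp [Matrix.map_apply]
    rw [h, Matrix.mul_one, add_zero]
  ext M
  constructor
  · rintro ⟨p', ⟨a', rfl⟩, rfl⟩
    refine ⟨Matrix.of fun i j => v ((∑ t : Fin k,
        Polynomial.C (a' t * c ^ q ^ (s * (t : ℕ))) *
        Polynomial.X ^ q ^ (s * (t : ℕ))).eval (αU i)) j,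
      ⟨_, ⟨fun t => a' t * c ^ q ^ (s * (t : ℕ)), rfl⟩, rfl⟩, ?_⟩
    simp only [hfun, hkey]
    have hcoef : ∀ t : Fin k, a' t * c ^ q ^ (s * (t : ℕ)) * c⁻¹ ^ q ^ (s * (t : ℕ)) = a' t := by
      intro t
      rw [mul_assoc, ← mul_pow, mul_inv_cancel₀ hc0, one_pow, mul_one]
    have : (∑ t : Fin k, Polynomial.C (a' t * c ^ q ^ (s * (t : ℕ)) * c⁻¹ ^ q ^ (s * (t : ℕ))) *
        Polynomial.X ^ q ^ (s * (t : ℕ)))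
        = ∑ t : Fin k, Polynomial.C (a' t) * Polynomial.X ^ q ^ (s * (t : ℕ)) :=
      Finset.sum_congr rfl fun t _ => by rw [hcoef t]
    simp only [this]
  · rintro ⟨X, ⟨p, ⟨a, rfl⟩, rfl⟩, rfl⟩
    simp only [hfun, hkey]
    exact ⟨_, ⟨fun t => a t * c⁻¹ ^ q ^ (s * (t : ℕ)), rfl⟩, rfl⟩
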